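/- Let (ν_i)_{i≥1} be a nondecreasing sequence of positive integers such that for every N only finitely many ν_i are below N. Then the formal power series identity holds: ∏_{i=1}^∞ (1 − x^{ν_i}) = 1 − (1 − x) ∑_{j=ν_1}^∞ χ[j+1] x^j, where χ[q] denotes the Euler characteristic (alternating sum ∑_{j}(−1)^j c_j(q), with c_j(q) the number of (j+1)-element index sets J with ∑_{i∈J} ν_i < q) of the scalar quota complex with weights ν_i and quota q. -/

import Mathlib

open scoped Classical

/-- Generating function for Euler characteristics of a scalar quota complex with
nondecreasing positive integer weights `ν₁ ≤ ν₂ ≤ …` (indices `i ≥ 1`), only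
finitely many below any bound.  The coefficient `A j` of the formal power series
`∏_{i≥1} (1 - x^{ν i})` is `∑_S (-1)^{|S|}` over index sets `S` with
`∑_{i∈S} ν i = j`, and `χ q` is the Euler characteristic of the quota complex
with quota `q`.  Then `∏_{i≥1}(1 - x^{ν i}) = 1 - (1-x) ∑_{j≥ν₁} χ(j+1) x^j`. -/
theorem quota_euler_generating_function
    (ν : ℕ → ℕ) (hν1 : ∀ i, 1 ≤ i → 1 ≤ ν i)
    (hmono : ∀ i j, 1 ≤ i → i ≤ j → ν i ≤ ν j)
    (hfin : ∀ N : ℕ, {i : ℕ | 1 ≤ i ∧ ν i < N}.Finite)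
    (A : ℕ → ℤ)
    (hA : ∀ j, A j = ∑ᶠ S : Finset ℕ,
      if (∀ i ∈ S, 1 ≤ i) ∧ ∑ i ∈ S, ν i = j then (-1 : ℤ) ^ S.card else 0)
    (χ : ℕ → ℤ)
    (hχ : ∀ q, χ q = ∑ᶠ S : Finset ℕ,
      if S.Nonempty ∧ (∀ i ∈ S, 1 ≤ i) ∧ ∑ i ∈ S, ν i < q
      then (-1 : ℤ) ^ (S.card + 1) else 0) :
    (∀ j, (Function.support fun S : Finset ℕ =>
      if (∀ i ∈ S, 1 ≤ i) ∧ ∑ i ∈ S, ν i = j then (-1 : ℤ) ^ S.card else 0).Finite) ∧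
    PowerSeries.mk A =
      1 - (1 - PowerSeries.X) *
        PowerSeries.mk (fun j => if ν 1 ≤ j then χ (j + 1) else 0) := by
  classical
  -- support of the A-summand is contained in the powerset of the finite set of
  -- indices with small weight
  have hsupp : ∀ j q : ℕ, j < q →
      (Function.support fun S : Finset ℕ =>
        if (∀ i ∈ S, 1 ≤ i) ∧ ∑ i ∈ S, ν i = j then (-1 : ℤ) ^ S.card else 0) ⊆
      (((hfin q).toFinset.powerset : Finset (Finset ℕ)) : Set (Finset ℕ)) := by
    intro j q hjq S hS
    simp only [Function.mem_support] at hS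
    by_cases h : (∀ i ∈ S, 1 ≤ i) ∧ ∑ i ∈ S, ν i = j
    · simp only [Finset.mem_coe, Finset.mem_powerset]
      intro i hi
      rw [Set.Finite.mem_toFinset]
      refine ⟨h.1 i hi, lt_of_le_of_lt ?_ hjq⟩
      calc ν i ≤ ∑ k ∈ S, ν k := Finset.single_le_sum (fun k _ => Nat.zero_le _) hi
        _ = j := h.2
    · simp [h] at hS
  have hAsum : ∀ q j : ℕ, j < q →
      A j = ∑ S ∈ (hfin q).toFinset.powerset,
        (if (∀ i ∈ S, 1 ≤ i) ∧ ∑ i ∈ S, ν i = j then (-1 : ℤ) ^ S.card else 0) := by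
    intro q j hjq
    rw [hA j]
    exact finsum_eq_sum_of_support_subset _ (hsupp j q hjq)
  -- A 0 = 1
  have hT1 : (hfin 1).toFinset = (∅ : Finset ℕ) := by
    ext i
    simp only [Set.Finite.mem_toFinset, Set.mem_setOf_eq, Finset.notMem_empty, iff_false]
    rintro ⟨h1, h2⟩
    exact absurd (hν1 i h1) (by omega)
  have hA0 : A 0 = 1 := by
    rw [hAsum 1 0 Nat.zero_lt_one, hT1]
    simp
  -- A j = 0 for 0 < j < ν 1
  have hAsmall : ∀ j, 0 < j → j < ν 1 → A j = 0 := by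
    intro j hj0 hj1
    rw [hA j]
    rw [finsum_eq_sum_of_support_subset _
      (s := (∅ : Finset (Finset ℕ)))]
    · simp
    · intro S hS
      simp only [Function.mem_support] at hS
      by_cases h : (∀ i ∈ S, 1 ≤ i) ∧ ∑ i ∈ S, ν i = j
      · exfalso
        rcases Finset.eq_empty_or_nonempty S with rfl | ⟨i, hi⟩
        · simp at h; omega
        · have h1i : 1 ≤ i := h.1 i hi
          have : ν 1 ≤ ν i := hmono 1 i le_rfl h1i
          have : ν i ≤ ∑ k ∈ S, ν k :=
            Finset.single_le_sum (fun k _ => Nat.zero_le _) hi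
          omega
      · simp [h] at hS
  -- χ q = 1 - ∑_{j < q} A j for q ≥ 1
  have hchi : ∀ q, 1 ≤ q → χ q = 1 - ∑ j ∈ Finset.range q, A j := by
    intro q hq
    set P := (hfin q).toFinset.powerset with hP
    have hrange : ∑ j ∈ Finset.range q, A j
        = ∑ S ∈ P, (if (∀ i ∈ S, 1 ≤ i) ∧ ∑ i ∈ S, ν i < q
            then (-1 : ℤ) ^ S.card else 0) := by
      have h1 : ∑ j ∈ Finset.range q, A j = ∑ j ∈ Finset.range q, ∑ S ∈ P,
          (if (∀ i ∈ S, 1 ≤ i) ∧ ∑ i ∈ S, ν i = j then (-1 : ℤ) ^ S.card else 0) :=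
        Finset.sum_congr rfl fun j hj => hAsum q j (Finset.mem_range.mp hj)
      rw [h1, Finset.sum_comm]
      refine Finset.sum_congr rfl fun S _ => ?_
      by_cases hpos : ∀ i ∈ S, 1 ≤ i
      · have h2 : ∀ j, (if (∀ i ∈ S, 1 ≤ i) ∧ ∑ i ∈ S, ν i = j then (-1 : ℤ) ^ S.card else 0)
            = (if (∑ i ∈ S, ν i) = j then (-1 : ℤ) ^ S.card else 0) := fun j =>
          if_congr (and_iff_right hpos) rfl rfl
        rw [Finset.sum_congr rfl fun j _ => h2 j,
          Finset.sum_ite_eq (Finset.range q) (∑ i ∈ S, ν i) (fun _ => (-1 : ℤ) ^ S.card)]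
        exact if_congr (by rw [Finset.mem_range]
                           exact ⟨fun h => ⟨hpos, h⟩, And.right⟩) rfl rfl
      · simp [hpos]
    -- χ as a sum over P
    have hχsum : χ q = ∑ S ∈ P,
        (if S.Nonempty ∧ (∀ i ∈ S, 1 ≤ i) ∧ ∑ i ∈ S, ν i < q
          then (-1 : ℤ) ^ (S.card + 1) else 0) := by
      rw [hχ q]
      refine finsum_eq_sum_of_support_subset _ ?_
      intro S hS
      simp only [Function.mem_support] at hS
      by_cases h : S.Nonempty ∧ (∀ i ∈ S, 1 ≤ i) ∧ ∑ i ∈ S, ν i < q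
      · simp only [Finset.mem_coe, hP, Finset.mem_powerset]
        intro i hi
        rw [Set.Finite.mem_toFinset]
        refine ⟨h.2.1 i hi, lt_of_le_of_lt ?_ h.2.2⟩
        exact Finset.single_le_sum (fun k _ => Nat.zero_le _) hi
      · simp [h] at hS
    -- termwise identity
    have hterm : ∀ S ∈ P,
        (if S.Nonempty ∧ (∀ i ∈ S, 1 ≤ i) ∧ ∑ i ∈ S, ν i < q
          then (-1 : ℤ) ^ (S.card + 1) else 0)
        = (if S = ∅ then (1 : ℤ) else 0)
          - (if (∀ i ∈ S, 1 ≤ i) ∧ ∑ i ∈ S, ν i < q then (-1 : ℤ) ^ S.card else 0) := by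
      intro S _
      rcases Finset.eq_empty_or_nonempty S with rfl | hne
      · have hc : (∀ i ∈ (∅ : Finset ℕ), 1 ≤ i) ∧ ∑ i ∈ (∅ : Finset ℕ), ν i < q :=
          ⟨by simp, by simp; omega⟩
        rw [if_neg (by simp [Finset.not_nonempty_empty]), if_pos rfl, if_pos hc]
        norm_num
      · have hne' : S ≠ ∅ := Finset.nonempty_iff_ne_empty.mp hne
        simp only [hne, true_and, hne', if_false]
        split_ifs with h
        · rw [pow_succ]; ring
        · ring
    rw [hχsum, Finset.sum_congr rfl hterm, Finset.sum_sub_distrib, ← hrange]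
    have hempty : ∑ S ∈ P, (if S = ∅ then (1 : ℤ) else 0) = 1 := by
      rw [Finset.sum_ite_eq' P (∅ : Finset ℕ) (fun _ => (1 : ℤ))]
      simp [hP, Finset.empty_mem_powerset]
    rw [hempty]
  constructor
  · intro j
    exact Set.Finite.subset ((hfin (j + 1)).toFinset.powerset.finite_toSet)
      (hsupp j (j + 1) (Nat.lt_succ_self j))
  · ext n
    rw [map_sub, sub_mul, one_mul, map_sub, PowerSeries.coeff_mk]
    cases n with
    | zero =>
      rw [PowerSeries.coeff_zero_X_mul, PowerSeries.coeff_mk]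
      have : ¬ ν 1 ≤ 0 := by have := hν1 1 le_rfl; omega
      simp [hA0, this, PowerSeries.coeff_one]
    | succ m =>
      rw [PowerSeries.coeff_succ_X_mul, PowerSeries.coeff_mk, PowerSeries.coeff_mk]
      have hone : (PowerSeries.coeff (R := ℤ) (m + 1)) 1 = 0 := by
        simp [PowerSeries.coeff_one]
      rw [hone]
      have hν1pos : 1 ≤ ν 1 := hν1 1 le_rfl
      rcases lt_trichotomy (ν 1) (m + 1) with hlt | heq | hgt
      · have h1 : ν 1 ≤ m := by omega
        have h2 : ν 1 ≤ m + 1 := by omega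
        rw [if_pos h1, if_pos h2, hchi (m + 1) (by omega), hchi (m + 2) (by omega),
          Finset.sum_range_succ (f := A) (n := m + 1)]
        ring
      · have h1 : ¬ ν 1 ≤ m := by omega
        have h2 : ν 1 ≤ m + 1 := by omega
        rw [if_neg h1, if_pos h2, hchi (m + 2) (by omega),
          Finset.sum_range_succ (f := A) (n := m + 1)]
        have hsum1 : ∑ j ∈ Finset.range (m + 1), A j = 1 := by
          rw [Finset.sum_eq_single_of_mem 0 (Finset.mem_range.mpr (by omega))
            (fun b hb hb0 => hAsmall b (by omega) (by
              have := Finset.mem_range.mp hb; omega))]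
          exact hA0
        rw [hsum1]
        ring
      · have h1 : ¬ ν 1 ≤ m := by omega
        have h2 : ¬ ν 1 ≤ m + 1 := by omega
        rw [if_neg h1, if_neg h2, hAsmall (m + 1) (by omega) (by omega)]
        ring
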